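/- The space BMO^w(ℝⁿ), equipped with the norm ‖f‖_{BMO^w} = ‖mf‖_∞ + ‖Mf‖_∞, is a complete normed space: every Cauchy sequence in this norm converges in BMO^w. -/

import Mathlib

open MeasureTheory ENNReal Filter Metric Topology

/-- A (hyper)cube in ℝⁿ. -/
def IsCube {n : ℕ} (Q : Set (Fin n → ℝ)) : Prop :=
  ∃ (a : Fin n → ℝ) (r : ℝ), 0 < r ∧ Q = Set.Icc a (fun i => a i + r)

/-- The `BMO^w` norm `‖f‖ = ‖mf‖_∞ + ‖Mf‖_∞ = sup_Q f_Q + sup_Q |⨍_Q (f − f_Q)|`,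
with `f_Q = |⨍_Q f|`. -/
noncomputable def BMOwNorm {n : ℕ} (f : (Fin n → ℝ) → ℝ) : ℝ≥0∞ :=
  (⨆ (Q : Set (Fin n → ℝ)) (_ : IsCube Q), ENNReal.ofReal |⨍ ξ in Q, f ξ|) +
  (⨆ (Q : Set (Fin n → ℝ)) (_ : IsCube Q),
    ENNReal.ofReal |⨍ ξ in Q, (f ξ - |⨍ η in Q, f η|)|)

lemma isCube_closedBall {n : ℕ} (x : Fin n → ℝ) {r : ℝ} (hr : 0 < r) :
    IsCube (closedBall x r) := by
  refine ⟨fun i => x i - r, 2 * r, by linarith, ?_⟩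
  rw [closedBall_pi x hr.le]
  have h1 : (Set.pi Set.univ fun i => closedBall (x i) r)
      = Set.pi Set.univ fun i => Set.Icc (x i - r) (x i + r) := by
    simp [Real.closedBall_eq_Icc]
  have h2 : (fun i : Fin n => x i + r) = fun i => (fun j : Fin n => x j - r) i + 2 * r := by
    funext i; ring
  rw [h1, Set.pi_univ_Icc, h2]

lemma eLpNorm_top_le_sup {n : ℕ} {f : (Fin n → ℝ) → ℝ} (hf : LocallyIntegrable f volume) :
    eLpNorm f ⊤ volume ≤
      ⨆ (Q : Set (Fin n → ℝ)) (_ : IsCube Q), ENNReal.ofReal |⨍ ξ in Q, f ξ| := by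
  set S := ⨆ (Q : Set (Fin n → ℝ)) (_ : IsCube Q), ENNReal.ofReal |⨍ ξ in Q, f ξ| with hSdef
  by_cases hS : S = ⊤
  · simp [hS]
  rw [eLpNorm_exponent_top, eLpNormEssSup]
  refine essSup_le_of_ae_le _ ?_
  filter_upwards [IsUnifLocDoublingMeasure.ae_tendsto_average (μ := volume) hf 1] with x hx
  have hx' : Tendsto (fun r : ℝ => ⨍ y in closedBall x r, f y) (𝓝[>] 0) (𝓝 (f x)) := by
    refine hx (fun _ => x) (fun r => r) tendsto_id ?_
    filter_upwards [self_mem_nhdsWithin] with r hr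
    simp only [mem_closedBall, dist_self]
    have : (0:ℝ) < r := hr
    linarith
  have key : ∀ r : ℝ, 0 < r → |⨍ y in closedBall x r, f y| ≤ S.toReal := by
    intro r hr
    rw [← ENNReal.ofReal_le_iff_le_toReal hS]
    exact le_iSup₂_of_le (closedBall x r) (isCube_closedBall x hr) le_rfl
  have hfx : |f x| ≤ S.toReal := by
    refine le_of_tendsto hx'.abs ?_
    filter_upwards [self_mem_nhdsWithin] with r hr using key r hr
  calc ‖f x‖ₑ = ENNReal.ofReal |f x| := Real.enorm_eq_ofReal_abs _
    _ ≤ ENNReal.ofReal S.toReal := ENNReal.ofReal_le_ofReal hfx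
    _ = S := ENNReal.ofReal_toReal hS

lemma cube_avg_bound {n : ℕ} {f : (Fin n → ℝ) → ℝ}
    {Q : Set (Fin n → ℝ)} (hQ : IsCube Q) {C : ℝ} (hC : 0 ≤ C)
    (h : ∀ᵐ x ∂(volume : Measure (Fin n → ℝ)), |f x| ≤ C) :
    |⨍ ξ in Q, f ξ| ≤ C := by
  obtain ⟨a, r, hr, rfl⟩ := hQ
  set s : Set (Fin n → ℝ) := Set.Icc a (fun i => a i + r)
  have hsfin : volume s < ⊤ := isCompact_Icc.measure_lt_top
  have hint : ‖∫ ξ in s, f ξ‖ ≤ C * (volume s).toReal := by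
    apply norm_setIntegral_le_of_norm_le_const_ae hsfin
    exact (ae_restrict_of_ae h).mono fun x hx => by simpa using hx
  rw [setAverage_eq]
  rw [smul_eq_mul, abs_mul, abs_of_nonneg (inv_nonneg.2 measureReal_nonneg)]
  calc (volume s).toReal⁻¹ * |∫ ξ in s, f ξ|
      ≤ (volume s).toReal⁻¹ * (C * (volume s).toReal) := by
        gcongr; exact hint
    _ = C * ((volume s).toReal⁻¹ * (volume s).toReal) := by ring
    _ ≤ C * 1 := by
        gcongr
        rcases eq_or_ne ((volume s).toReal) 0 with h0 | h0
        · simp [h0]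
        · rw [inv_mul_cancel₀ h0]
    _ = C := mul_one C

lemma bmow_le_eLpNorm {n : ℕ} {f : (Fin n → ℝ) → ℝ} :
    BMOwNorm f ≤ 3 * eLpNorm f ⊤ volume := by
  by_cases hC : eLpNorm f ⊤ volume = ⊤
  · rw [hC, ENNReal.mul_top (by norm_num)]; exact le_top
  set C : ℝ := (eLpNorm f ⊤ volume).toReal with hCdef
  have hC0 : 0 ≤ C := ENNReal.toReal_nonneg
  have hae : ∀ᵐ x ∂(volume : Measure (Fin n → ℝ)), |f x| ≤ C := by
    filter_upwards [ae_le_eLpNormEssSup (f := f) (μ := (volume : Measure (Fin n → ℝ)))] with x hx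
    have h3 : (‖f x‖₊ : ℝ≥0∞) ≤ eLpNorm f ⊤ volume := by rw [eLpNorm_exponent_top]; exact hx
    have := ENNReal.toReal_mono hC h3
    simpa [Real.norm_eq_abs, hCdef] using this
  have h1 : ∀ Q : Set (Fin n → ℝ), IsCube Q → |⨍ ξ in Q, f ξ| ≤ C :=
    fun Q hQ => cube_avg_bound hQ hC0 hae
  have h2 : ∀ Q : Set (Fin n → ℝ), IsCube Q →
      |⨍ ξ in Q, (f ξ - |⨍ η in Q, f η|)| ≤ 2 * C := by
    intro Q hQ
    apply cube_avg_bound hQ (by linarith)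
    filter_upwards [hae] with x hx
    have hc : |(|⨍ η in Q, f η|)| ≤ C := by
      rw [abs_abs]; exact h1 Q hQ
    exact (abs_sub (f x) _).trans (by linarith)
  have e1 : (⨆ (Q : Set (Fin n → ℝ)) (_ : IsCube Q), ENNReal.ofReal |⨍ ξ in Q, f ξ|)
      ≤ ENNReal.ofReal C :=
    iSup₂_le fun Q hQ => ENNReal.ofReal_le_ofReal (h1 Q hQ)
  have e2 : (⨆ (Q : Set (Fin n → ℝ)) (_ : IsCube Q),
      ENNReal.ofReal |⨍ ξ in Q, (f ξ - |⨍ η in Q, f η|)|) ≤ ENNReal.ofReal (2 * C) :=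
    iSup₂_le fun Q hQ => ENNReal.ofReal_le_ofReal (h2 Q hQ)
  calc BMOwNorm f ≤ ENNReal.ofReal C + ENNReal.ofReal (2 * C) := add_le_add e1 e2
    _ = ENNReal.ofReal (3 * C) := by
        rw [← ENNReal.ofReal_add hC0 (by linarith)]; congr 1; ring
    _ = ENNReal.ofReal 3 * ENNReal.ofReal C := ENNReal.ofReal_mul (by norm_num : (0:ℝ) ≤ 3)
    _ = 3 * eLpNorm f ⊤ volume := by
        rw [hCdef, ENNReal.ofReal_toReal hC]
        norm_num


/-- Completeness of `BMO^w`: every Cauchy sequence (in the `BMO^w` norm) of functions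
of finite `BMO^w` norm converges in the `BMO^w` norm to a function in `BMO^w`. -/
theorem stmt4 {n : ℕ} (f : ℕ → (Fin n → ℝ) → ℝ)
    (hloc : ∀ k, LocallyIntegrable (f k) volume)
    (hfin : ∀ k, BMOwNorm (f k) < ⊤)
    (hcauchy : ∀ ε : ℝ, 0 < ε → ∃ N : ℕ, ∀ p ≥ N, ∀ q ≥ N,
      BMOwNorm (f p - f q) < ENNReal.ofReal ε) :
    ∃ g : (Fin n → ℝ) → ℝ, LocallyIntegrable g volume ∧ BMOwNorm g < ⊤ ∧
      Tendsto (fun k => BMOwNorm (f k - g)) atTop (nhds 0) := by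
  have key : ∀ h : (Fin n → ℝ) → ℝ, LocallyIntegrable h volume →
      eLpNorm h ⊤ volume ≤ BMOwNorm h := fun h hh =>
    (eLpNorm_top_le_sup hh).trans le_self_add
  have hmem : ∀ k, MemLp (f k) ⊤ (volume : Measure (Fin n → ℝ)) := fun k =>
    ⟨(hloc k).aestronglyMeasurable, lt_of_le_of_lt (key _ (hloc k)) (hfin k)⟩
  set F : ℕ → Lp ℝ ⊤ (volume : Measure (Fin n → ℝ)) := fun k => (hmem k).toLp (f k) with hF
  have hdist : ∀ p q, dist (F p) (F q) = (eLpNorm (f p - f q) ⊤ volume).toReal := by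
    intro p q
    rw [hF]
    rw [dist_eq_norm, ← MemLp.toLp_sub (hmem p) (hmem q), Lp.norm_toLp]
  have hCau : CauchySeq F := by
    rw [Metric.cauchySeq_iff]
    intro ε hε
    obtain ⟨N, hN⟩ := hcauchy ε hε
    refine ⟨N, fun p hp q hq => ?_⟩
    rw [hdist]
    have h1 : eLpNorm (f p - f q) ⊤ volume < ENNReal.ofReal ε :=
      lt_of_le_of_lt (key _ ((hloc p).sub (hloc q))) (hN p hp q hq)
    have h2 : eLpNorm (f p - f q) ⊤ volume ≠ ⊤ := (h1.trans_le le_top).ne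
    exact (ENNReal.lt_ofReal_iff_toReal_lt h2).mp h1
  haveI : Fact ((1:ℝ≥0∞) ≤ ⊤) := ⟨le_top⟩
  obtain ⟨G, hG⟩ := cauchySeq_tendsto_of_complete hCau
  set g : (Fin n → ℝ) → ℝ := ⇑G with hg
  have hgloc : LocallyIntegrable g volume := (Lp.memLp G).locallyIntegrable le_top
  have hFk : ∀ k, ⇑(F k) =ᵐ[volume] f k := fun k => (hmem k).coeFn_toLp
  have hsub_ae : ∀ k, (f k - g) =ᵐ[volume] ⇑(F k - G) := by
    intro k
    filter_upwards [hFk k, Lp.coeFn_sub (F k) G] with x h1 h2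
    simp only [Pi.sub_apply, h2, h1, hg]
  have heq : ∀ k, eLpNorm (f k - g) ⊤ volume = ENNReal.ofReal (dist (F k) G) := by
    intro k
    rw [eLpNorm_congr_ae (hsub_ae k), Lp.dist_def, ENNReal.ofReal_toReal
      (eLpNorm_congr_ae (Lp.coeFn_sub (F k) G) ▸ (Lp.eLpNorm_lt_top (F k - G)).ne)]
    exact eLpNorm_congr_ae (Lp.coeFn_sub (F k) G)
  have htend : Tendsto (fun k => eLpNorm (f k - g) ⊤ volume) atTop (nhds 0) := by
    simp only [heq]
    have : Tendsto (fun k => dist (F k) G) atTop (nhds 0) :=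
      tendsto_iff_dist_tendsto_zero.mp hG
    simpa using (ENNReal.tendsto_ofReal this)
  refine ⟨g, hgloc, ?_, ?_⟩
  · exact lt_of_le_of_lt bmow_le_eLpNorm
      (ENNReal.mul_lt_top (by norm_num) (Lp.eLpNorm_lt_top G))
  · have hb : ∀ k, BMOwNorm (f k - g) ≤ 3 * eLpNorm (f k - g) ⊤ volume :=
      fun k => bmow_le_eLpNorm
    have h3 : Tendsto (fun k => 3 * eLpNorm (f k - g) ⊤ volume) atTop (nhds 0) := by
      have := ENNReal.Tendsto.const_mul htend (Or.inr (by norm_num : (3:ℝ≥0∞) ≠ ⊤))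
      simpa using this
    exact tendsto_of_tendsto_of_tendsto_of_le_of_le tendsto_const_nhds h3
      (fun k => zero_le) hb
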